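/- Let N ≥ 1 and let L be a positive operator on the N-partite Hilbert space H. Let (v_s)_{s ∈ ℕ} be a sequence of unit product vectors such that for every s, v_{s+1} attains the maximum of |⟨w, L v_s⟩| over all unit product vectors w, with phase chosen so that ⟨v_{s+1}, L v_s⟩ ≥ 0. Then the sequence g_s = ⟨v_s, L v_s⟩ of real expectation values is monotone nondecreasing and converges to a limit ḡ satisfying 0 ≤ ḡ ≤ g_max(L), where g_max(L) is the supremum of ⟨w, L w⟩ over all unit product vectors w. (Theorem 4, Local convergence of the separability power iteration.) -/

import Mathlib

open scoped ComplexInnerProductSpace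

/-- The product vector `P(a)` of a family of vectors, `P(a) i = ∏ j, a j (i j)`. -/
noncomputable def prodVec {N : ℕ} {d : Fin N → ℕ}
    (a : (j : Fin N) → EuclideanSpace ℂ (Fin (d j))) :
    EuclideanSpace ℂ ((j : Fin N) → Fin (d j)) :=
  WithLp.toLp 2 (fun i => ∏ j, a j (i j))

/-- A unit product vector: `v = P(a)` with every `a j` a unit vector. -/
def IsUnitProd {N : ℕ} {d : Fin N → ℕ}
    (v : EuclideanSpace ℂ ((j : Fin N) → Fin (d j))) : Prop :=
  ∃ a : (j : Fin N) → EuclideanSpace ℂ (Fin (d j)), (∀ j, ‖a j‖ = 1) ∧ v = prodVec a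

lemma norm_unitProd {N : ℕ} {d : Fin N → ℕ}
    {v : EuclideanSpace ℂ ((j : Fin N) → Fin (d j))} (hv : IsUnitProd v) : ‖v‖ = 1 := by
  obtain ⟨a, ha, rfl⟩ := hv
  rw [EuclideanSpace.norm_eq]
  have h1 : ∀ i : (j : Fin N) → Fin (d j), ‖prodVec a i‖ ^ 2 = ∏ j, ‖a j (i j)‖ ^ 2 := by
    intro i
    rw [show prodVec a i = ∏ j, a j (i j) from rfl, norm_prod, Finset.prod_pow]
  have h2 : ∑ i, ‖prodVec a i‖ ^ 2 = ∏ j, ∑ k, ‖a j k‖ ^ 2 := by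
    simp only [h1]
    rw [Finset.prod_univ_sum, Fintype.piFinset_univ]
  have h3 : ∀ j, ∑ k, ‖a j k‖ ^ 2 = 1 := by
    intro j
    have := ha j
    rw [EuclideanSpace.norm_eq] at this
    have h4 : (0:ℝ) ≤ ∑ k, ‖a j k‖ ^ 2 := Finset.sum_nonneg fun _ _ => sq_nonneg _
    nlinarith [Real.sq_sqrt h4, Real.sqrt_nonneg (∑ k, ‖a j k‖ ^ 2)]
  have h5 : ∏ j, ∑ k, ‖a j k‖ ^ 2 = 1 := Finset.prod_eq_one fun j _ => h3 j
  rw [h2, h5, Real.sqrt_one]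

/-- **Theorem 4 (Local convergence of the separability power iteration).**
Let `L` be a positive operator on the `(N+1)`-partite space, and `(v_s)` a sequence
of unit product vectors such that `v_{s+1}` maximizes `|⟨w, L v_s⟩|` over unit product
vectors `w`, with phase chosen so that `⟨v_{s+1}, L v_s⟩ ≥ 0`.  Then the sequence of
expectation values `g_s = ⟨v_s, L v_s⟩` is monotone nondecreasing and converges to a
limit `ḡ` with `0 ≤ ḡ ≤ g_max(L)`. -/
theorem local_convergence {N : ℕ} {d : Fin (N + 1) → ℕ}
    (L : EuclideanSpace ℂ ((j : Fin (N + 1)) → Fin (d j)) →L[ℂ]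
        EuclideanSpace ℂ ((j : Fin (N + 1)) → Fin (d j)))
    (hLsa : IsSelfAdjoint L)
    (hLpos : ∀ x : EuclideanSpace ℂ ((j : Fin (N + 1)) → Fin (d j)),
      x ≠ 0 → 0 < (⟪x, L x⟫).re)
    (v : ℕ → EuclideanSpace ℂ ((j : Fin (N + 1)) → Fin (d j)))
    (hv : ∀ s, IsUnitProd (v s))
    (hmax : ∀ s, ∀ w : EuclideanSpace ℂ ((j : Fin (N + 1)) → Fin (d j)),
      IsUnitProd w → ‖⟪w, L (v s)⟫‖ ≤ ‖⟪v (s + 1), L (v s)⟫‖)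
    (hphase : ∀ s, (⟪v (s + 1), L (v s)⟫).im = 0 ∧ 0 ≤ (⟪v (s + 1), L (v s)⟫).re) :
    Monotone (fun s => (⟪v s, L (v s)⟫).re) ∧
    ∃ gbar : ℝ,
      Filter.Tendsto (fun s => (⟪v s, L (v s)⟫).re) Filter.atTop (nhds gbar) ∧
      0 ≤ gbar ∧
      gbar ≤ sSup {r : ℝ | ∃ w, IsUnitProd w ∧ r = (⟪w, L w⟫).re} := by
  have hnz : ∀ s, v s ≠ 0 := by
    intro s h
    have h1 := norm_unitProd (hv s)
    rw [h] at h1; simp at h1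
  set g : ℕ → ℝ := fun s => (⟪v s, L (v s)⟫).re with hg
  have hsym : ∀ x y, (⟪L x, y⟫ : ℂ) = ⟪x, L y⟫ := fun x y => hLsa.isSymmetric x y
  have hmono : Monotone g := by
    apply monotone_nat_of_le_succ
    intro s
    set x := v (s + 1)
    set y := v s
    set c : ℝ := (⟪x, L y⟫ : ℂ).re with hc
    have him : (⟪x, L y⟫ : ℂ).im = 0 := (hphase s).1
    have hc0 : 0 ≤ c := (hphase s).2
    have hz : (⟪x, L y⟫ : ℂ) = (c : ℂ) := Complex.ext rfl (by simpa using him)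
    have hcg : g s ≤ c := by
      calc g s ≤ ‖(⟪y, L y⟫ : ℂ)‖ := Complex.re_le_norm _
        _ ≤ ‖(⟪x, L y⟫ : ℂ)‖ := hmax s y (hv s)
        _ = c := by rw [hz, Complex.norm_real, Real.norm_eq_abs, abs_of_nonneg hc0]
    have hsw : (⟪y, L x⟫ : ℂ).re = c := by
      have h1 : (⟪y, L x⟫ : ℂ) = starRingEnd ℂ ⟪x, L y⟫ := by
        rw [← hsym y x, ← inner_conj_symm]
      rw [h1]; exact Complex.conj_re _
    have expand : ∀ t : ℝ, (⟪x - (t:ℂ) • y, L (x - (t:ℂ) • y)⟫ : ℂ).re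
        = g (s + 1) - 2 * t * c + t ^ 2 * g s := by
      intro t
      have hcpx : (⟪x - (t:ℂ) • y, L (x - (t:ℂ) • y)⟫ : ℂ)
          = ⟪x, L x⟫ - (t:ℂ) * ⟪x, L y⟫ - (t:ℂ) * ⟪y, L x⟫ + ((t:ℂ) * t) * ⟪y, L y⟫ := by
        simp only [map_sub, map_smul, inner_sub_left, inner_sub_right, inner_smul_left,
          inner_smul_right, Complex.conj_ofReal]
        ring
      rw [hcpx]
      simp only [Complex.add_re, Complex.sub_re, ← Complex.ofReal_mul,
        Complex.re_ofReal_mul, hsw]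
      have : ((⟪x, L y⟫ : ℂ)).re = c := rfl
      rw [this]
      ring
    have key : ∀ t : ℝ, 0 ≤ g (s + 1) - 2 * t * c + t ^ 2 * g s := by
      intro t
      rw [← expand t]
      by_cases h : x - (t:ℂ) • y = 0
      · rw [h]; simp
      · exact le_of_lt (hLpos _ h)
    have hgs_pos : 0 < g s := hLpos _ (hnz s)
    have h1 := key (c / g s)
    have e1 : 2 * (c / g s) * c = 2 * (c ^ 2 / g s) := by ring
    have e2 : (c / g s) ^ 2 * g s = c ^ 2 / g s := by field_simp
    rw [e1, e2] at h1
    have h3 : c ^ 2 / g s ≤ g (s + 1) := by linarith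
    have h4 : g s ≤ c ^ 2 / g s := by
      rw [le_div_iff₀ hgs_pos]; nlinarith
    linarith
  refine ⟨hmono, ?_⟩
  set S : Set ℝ := {r : ℝ | ∃ w, IsUnitProd w ∧ r = (⟪w, L w⟫ : ℂ).re} with hS
  have hbdd : BddAbove S := by
    refine ⟨‖L‖, ?_⟩
    rintro r ⟨w, hw, rfl⟩
    have hwn : ‖w‖ = 1 := norm_unitProd hw
    calc (⟪w, L w⟫ : ℂ).re ≤ ‖(⟪w, L w⟫ : ℂ)‖ := Complex.re_le_norm _
      _ ≤ ‖w‖ * ‖L w‖ := norm_inner_le_norm _ _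
      _ ≤ ‖w‖ * (‖L‖ * ‖w‖) := by
          gcongr
          exact L.le_opNorm w
      _ = ‖L‖ := by rw [hwn]; ring
  have hmem : ∀ s, g s ∈ S := fun s => ⟨v s, hv s, rfl⟩
  have hub : ∀ s, g s ≤ sSup S := fun s => le_csSup hbdd (hmem s)
  have hbr : BddAbove (Set.range g) := ⟨sSup S, by rintro r ⟨s, rfl⟩; exact hub s⟩
  refine ⟨⨆ s, g s, tendsto_atTop_ciSup hmono hbr, ?_, ciSup_le hub⟩
  exact le_trans (le_of_lt (hLpos _ (hnz 0))) (le_ciSup hbr 0)
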